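/- Define Eff(σ) for signature σ = (0; 2,3,7; 0) as the set of nonnegative integers d with -2d + ⌊d/2⌋ + ⌊2d/3⌋ + ⌊6d/7⌋ ≥ 0. Then Eff(σ) is exactly the submonoid of (ℤ_{≥0}, +) generated by 6, 14, 21, and the smallest integer s such that Eff(σ) ⊇ ℤ_{≥ s} is s = 44. -/

import Mathlib

/-- For signature `(0; 2,3,7; 0)`, the effective monoid
`Eff = {d : -2d + ⌊d/2⌋ + ⌊2d/3⌋ + ⌊6d/7⌋ ≥ 0}` is the submonoid of `ℤ≥0` generated by
`6, 14, 21`, and its saturation (least `s` with `ℤ≥s ⊆ Eff`) is `44`. -/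
theorem eff_monoid_237 :
    ({d : ℕ | 2 * d ≤ d / 2 + 2 * d / 3 + 6 * d / 7} : Set ℕ)
        = (AddSubmonoid.closure ({6, 14, 21} : Set ℕ) : Set ℕ) ∧
      IsLeast {s : ℕ | ∀ n : ℕ, s ≤ n → 2 * n ≤ n / 2 + 2 * n / 3 + 6 * n / 7} 44 := by
  constructor
  · ext d
    simp only [Set.mem_setOf_eq, SetLike.mem_coe]
    constructor
    · intro hd
      have h6 : (6 : ℕ) ∈ AddSubmonoid.closure ({6, 14, 21} : Set ℕ) :=
        AddSubmonoid.subset_closure (by simp)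
      have h14 : (14 : ℕ) ∈ AddSubmonoid.closure ({6, 14, 21} : Set ℕ) :=
        AddSubmonoid.subset_closure (by simp)
      have h21 : (21 : ℕ) ∈ AddSubmonoid.closure ({6, 14, 21} : Set ℕ) :=
        AddSubmonoid.subset_closure (by simp)
      set a : ℕ := 6 * d % 7 + 7 * ((d - (21 * (d % 2) + 14 * (2 * d % 3) + 6 * (6 * d % 7))) / 42) with ha
      set b : ℕ := 2 * d % 3 with hb
      set c : ℕ := d % 2 with hc
      have hdec : d = a • 6 + b • 14 + c • 21 := by
        simp only [smul_eq_mul, ha, hb, hc]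
        omega
      rw [hdec]
      exact add_mem (add_mem (nsmul_mem h6 a) (nsmul_mem h14 b)) (nsmul_mem h21 c)
    · intro hd
      induction hd using AddSubmonoid.closure_induction with
      | mem x hx =>
        rcases hx with rfl | rfl | rfl <;> norm_num
      | zero => simp
      | add x y _ _ hx hy =>
        have hj : x / 2 + y / 2 ≤ (x + y) / 2 := by omega
        have hk : 2 * x / 3 + 2 * y / 3 ≤ 2 * (x + y) / 3 := by omega
        have hl : 6 * x / 7 + 6 * y / 7 ≤ 6 * (x + y) / 7 := by omega
        omega
  · constructor
    · intro n hn
      omega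
    · intro s hs
      by_contra hlt
      push_neg at hlt
      have := hs 43 (by omega)
      omega
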